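/- arXiv:0711.1914 — 4 statements merged into one kernel-verified Lean document; each statement's English description precedes it below -/
import Mathlib

section
/- Let r, q be positive integers with 1 ≤ q ≤ r. For a subset S of {1, 2, ..., r+q} with |S| = q (thought of as the positions of q ones in a linear arrangement of r zeros and q ones), define K(S) = Σ_{j ∈ S} #{k : j < k ≤ r+q, k ∉ S} (the total number of zeros to the right of each one). Then Σ_S exp(−2πi·K(S)/(r+1)) = 0, where the sum is over all subsets S of {1, ..., r+q} of cardinality q. -/
open Finset

namespace Forrester

/-- number of zeros to the right of `j` within `{1,…,n}` -/
def c (n j : ℕ) (S : Finset ℕ) : ℕ := ((Icc 1 n).filter (fun k => j < k ∧ k ∉ S)).card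

/-- total number of zeros to the right of ones -/
def Kf (n : ℕ) (S : Finset ℕ) : ℕ := ∑ j ∈ S, c n j S

noncomputable def ζ (r : ℕ) : ℂ := Complex.exp (-(2 * Real.pi * Complex.I / ((r : ℂ) + 1)))

lemma zeta_primitive (r : ℕ) : IsPrimitiveRoot (ζ r) (r + 1) := by
  have h := (Complex.isPrimitiveRoot_exp (r + 1) (Nat.succ_ne_zero r)).inv
  have e : ζ r = (Complex.exp (2 * Real.pi * Complex.I / ((r + 1 : ℕ) : ℂ)))⁻¹ := by
    rw [← Complex.exp_neg, ζ]
    congr 1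
    push_cast
    ring
  rwa [← e] at h

lemma zeta_pow_card (r : ℕ) : (ζ r) ^ (r + 1) = 1 := (zeta_primitive r).pow_eq_one

lemma zeta_pow_ne_one (r q : ℕ) (hq1 : 1 ≤ q) (hqr : q ≤ r) : (ζ r) ^ q ≠ 1 := by
  intro h
  rw [(zeta_primitive r).pow_eq_one_iff_dvd] at h
  have := Nat.le_of_dvd (by omega) h
  omega

noncomputable def f (r n q : ℕ) : ℂ := ∑ S ∈ (Icc 1 n).powersetCard q, (ζ r) ^ (Kf n S)

/-! ### Pascal-type recursion -/

lemma Kf_not_mem (n : ℕ) (S : Finset ℕ) (hS : S ⊆ Icc 1 n) :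
    Kf (n + 1) S = Kf n S + S.card := by
  unfold Kf
  rw [Finset.card_eq_sum_ones, ← Finset.sum_add_distrib]
  refine Finset.sum_congr rfl (fun j hj => ?_)
  have hj' := hS hj
  simp only [mem_Icc] at hj'
  unfold c
  have hIcc : Icc 1 (n + 1) = insert (n + 1) (Icc 1 n) := by
    ext k; simp [mem_Icc]; omega
  have hn1 : (n + 1) ∉ S := fun h => by have := hS h; simp [mem_Icc] at this
  rw [hIcc, Finset.filter_insert, if_pos ⟨by omega, hn1⟩,
    Finset.card_insert_of_notMem (by simp only [mem_filter, mem_Icc]; omega)]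

lemma Kf_insert (n : ℕ) (T : Finset ℕ) (hT : T ⊆ Icc 1 n) :
    Kf (n + 1) (insert (n + 1) T) = Kf n T := by
  have hn1 : (n + 1) ∉ T := fun h => by have := hT h; simp [mem_Icc] at this
  unfold Kf
  rw [Finset.sum_insert hn1]
  have h0 : c (n + 1) (n + 1) (insert (n + 1) T) = 0 := by
    unfold c
    rw [Finset.card_eq_zero, Finset.filter_eq_empty_iff]
    intro k hk
    simp only [mem_Icc] at hk
    push_neg
    intro h
    omega
  rw [h0, zero_add]
  refine Finset.sum_congr rfl (fun j hj => ?_)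
  unfold c
  congr 1
  ext k
  simp only [mem_filter, mem_Icc, Finset.mem_insert]
  constructor
  · rintro ⟨hk, hjk, hnot⟩
    push_neg at hnot
    have hkn : k ≠ n + 1 := hnot.1
    exact ⟨⟨hk.1, by omega⟩, hjk, hnot.2⟩
  · rintro ⟨hk, hjk, hnot⟩
    refine ⟨⟨hk.1, by omega⟩, hjk, ?_⟩
    push_neg
    exact ⟨by omega, hnot⟩

lemma f_rec (r n q : ℕ) : f r (n + 1) (q + 1) = f r n q + (ζ r) ^ (q + 1) * f r n (q + 1) := by
  unfold f
  have hIcc : Icc 1 (n + 1) = insert (n + 1) (Icc 1 n) := by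
    ext k; simp [mem_Icc]; omega
  have hn1 : (n + 1) ∉ Icc 1 n := by simp [mem_Icc]
  rw [hIcc, Finset.powersetCard_succ_insert hn1]
  rw [Finset.sum_union]
  · have hA : ∑ S ∈ (Icc 1 n).powersetCard (q + 1), (ζ r) ^ Kf (n + 1) S
        = (ζ r) ^ (q + 1) * f r n (q + 1) := by
      rw [f, Finset.mul_sum]
      refine Finset.sum_congr rfl (fun S hS => ?_)
      rw [mem_powersetCard] at hS
      rw [Kf_not_mem n S hS.1, hS.2, pow_add, mul_comm]
    have hB : ∑ S ∈ ((Icc 1 n).powersetCard q).image (insert (n + 1)),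
        (ζ r) ^ Kf (n + 1) S = f r n q := by
      rw [f, Finset.sum_image]
      · refine Finset.sum_congr rfl (fun T hT => ?_)
        rw [mem_powersetCard] at hT
        rw [Kf_insert n T hT.1]
      · intro T hT T' hT' h
        rw [Finset.mem_coe, mem_powersetCard] at hT hT'
        have h1 : (n + 1) ∉ T := fun hc => by have := hT.1 hc; simp [mem_Icc] at this
        have h2 : (n + 1) ∉ T' := fun hc => by have := hT'.1 hc; simp [mem_Icc] at this
        rw [← Finset.erase_insert h1, ← Finset.erase_insert h2, h]
    rw [hA, hB]
    exact add_comm _ _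
  · rw [Finset.disjoint_right]
    intro S hS hS'
    rw [Finset.mem_image] at hS
    obtain ⟨T, hT, rfl⟩ := hS
    rw [mem_powersetCard] at hS'
    have : (n + 1) ∈ insert (n + 1) T := Finset.mem_insert_self _ _
    have := hS'.1 this
    simp [mem_Icc] at this


/-! ### Rotation argument at n = r + 1 -/

def σf (n k : ℕ) : ℕ := if k = n then 1 else k + 1
def ρf (n k : ℕ) : ℕ := if k = 1 then n else k - 1

lemma sigma_mem {n k : ℕ} (hk : k ∈ Icc 1 n) : σf n k ∈ Icc 1 n := by
  simp only [mem_Icc] at *; unfold σf; split <;> omega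

lemma rho_mem {n k : ℕ} (hk : k ∈ Icc 1 n) : ρf n k ∈ Icc 1 n := by
  simp only [mem_Icc] at *; unfold ρf; split <;> omega

lemma rho_sigma {n k : ℕ} (hk : k ∈ Icc 1 n) : ρf n (σf n k) = k := by
  simp only [mem_Icc] at hk; unfold σf ρf; split_ifs <;> omega

lemma sigma_rho {n k : ℕ} (hk : k ∈ Icc 1 n) : σf n (ρf n k) = k := by
  simp only [mem_Icc] at hk; unfold σf ρf; split_ifs <;> omega

lemma sigma_inj {n j k : ℕ} (hj : j ∈ Icc 1 n) (hk : k ∈ Icc 1 n)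
    (h : σf n j = σf n k) : j = k := by
  rw [← rho_sigma hj, ← rho_sigma hk, h]

lemma sigma_injOn (n : ℕ) : Set.InjOn (σf n) (Icc 1 n) :=
  fun a ha b hb h => sigma_inj ha hb h

lemma mem_image_sigma {n k : ℕ} {S : Finset ℕ} (hS : S ⊆ Icc 1 n) (hk : k ∈ Icc 1 n) :
    σf n k ∈ S.image (σf n) ↔ k ∈ S := by
  constructor
  · intro h
    rw [Finset.mem_image] at h
    obtain ⟨j, hj, hjk⟩ := h
    rwa [← sigma_inj (hS hj) hk hjk]
  · exact fun h => Finset.mem_image_of_mem _ h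

lemma image_sigma_Icc (n : ℕ) : (Icc 1 n).image (σf n) = Icc 1 n := by
  apply Finset.eq_of_subset_of_card_le
  · intro k hk
    rw [Finset.mem_image] at hk
    obtain ⟨j, hj, rfl⟩ := hk
    exact sigma_mem hj
  · rw [Finset.card_image_of_injOn (sigma_injOn n)]

lemma image_sigma_subset {n : ℕ} {S : Finset ℕ} (hS : S ⊆ Icc 1 n) :
    S.image (σf n) ⊆ Icc 1 n := by
  intro k hk
  rw [Finset.mem_image] at hk
  obtain ⟨j, hj, rfl⟩ := hk
  exact sigma_mem (hS hj)

lemma c_sigma {n j : ℕ} {S : Finset ℕ} (hS : S ⊆ Icc 1 n) (hj : j ∈ Icc 1 n) :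
    c n (σf n j) (S.image (σf n))
      = ((Icc 1 n).filter (fun k => σf n j < σf n k ∧ k ∉ S)).card := by
  unfold c
  conv_lhs => rw [← image_sigma_Icc n, Finset.filter_image]
  rw [Finset.card_image_of_injOn ((sigma_injOn n).mono (by
    intro x hx; exact Finset.mem_coe.mp (Finset.mem_of_mem_filter x hx)))]
  congr 1
  refine Finset.filter_congr (fun k hk => ?_)
  rw [mem_image_sigma hS hk]

lemma c_rot_lt {n j : ℕ} {S : Finset ℕ} (hS : S ⊆ Icc 1 n) (hj : j ∈ Icc 1 n)
    (hjn : j ≠ n) (hnS : n ∈ S) :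
    (Icc 1 n).filter (fun k => σf n j < σf n k ∧ k ∉ S)
      = (Icc 1 n).filter (fun k => j < k ∧ k ∉ S) := by
  refine Finset.filter_congr (fun k hk => ?_)
  simp only [mem_Icc] at hj hk
  by_cases hkn : k = n
  · subst hkn; simp [hnS]
  · simp only [σf, if_neg hjn, if_neg hkn]
    constructor
    · rintro ⟨h1, h2⟩; exact ⟨by omega, h2⟩
    · rintro ⟨h1, h2⟩; exact ⟨by omega, h2⟩

lemma c_rot_notmem {n j : ℕ} {S : Finset ℕ} (hS : S ⊆ Icc 1 n) (hj : j ∈ Icc 1 n)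
    (hjn : j ≠ n) (hnS : n ∉ S) :
    (Icc 1 n).filter (fun k => σf n j < σf n k ∧ k ∉ S)
      = ((Icc 1 n).filter (fun k => j < k ∧ k ∉ S)).erase n := by
  ext k
  simp only [Finset.mem_erase, mem_filter, mem_Icc] at *
  by_cases hkn : k = n
  · subst hkn
    simp only [σf, if_pos rfl, if_neg hjn, if_true, eq_self_iff_true]
    constructor
    · rintro ⟨-, h, -⟩; omega
    · rintro ⟨h, -⟩; exact absurd rfl h
  · simp only [σf, if_neg hjn, if_neg hkn]
    constructor
    · rintro ⟨hk, h1, h2⟩; exact ⟨hkn, hk, by omega, h2⟩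
    · rintro ⟨-, hk, h1, h2⟩; exact ⟨hk, by omega, h2⟩

lemma c_rot_top {n : ℕ} {S : Finset ℕ} (hS : S ⊆ Icc 1 n) (hnS : n ∈ S) :
    (Icc 1 n).filter (fun k => σf n n < σf n k ∧ k ∉ S)
      = (Icc 1 n).filter (fun k => k ∉ S) := by
  refine Finset.filter_congr (fun k hk => ?_)
  simp only [mem_Icc] at hk
  by_cases hkn : k = n
  · subst hkn; simp [hnS]
  · simp only [σf, if_pos rfl, if_neg hkn, if_true, eq_self_iff_true]
    constructor
    · rintro ⟨-, h⟩; exact h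
    · intro h; exact ⟨by omega, h⟩

lemma card_filter_notmem {n : ℕ} {S : Finset ℕ} (hS : S ⊆ Icc 1 n) :
    ((Icc 1 n).filter (fun k => k ∉ S)).card = n - S.card := by
  have : (Icc 1 n).filter (fun k => k ∉ S) = Icc 1 n \ S := by
    ext k; simp [Finset.mem_sdiff]
  rw [this, Finset.card_sdiff_of_subset hS, Nat.card_Icc]
  omega

lemma c_top_zero (n : ℕ) (S : Finset ℕ) : c n n S = 0 := by
  unfold c
  rw [Finset.card_eq_zero, Finset.filter_eq_empty_iff]
  intro k hk
  simp only [mem_Icc] at hk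
  push_neg
  intro h
  omega

lemma Kf_rot_eq_sum {n : ℕ} {S : Finset ℕ} (hS : S ⊆ Icc 1 n) :
    Kf n (S.image (σf n)) = ∑ j ∈ S, c n (σf n j) (S.image (σf n)) := by
  unfold Kf
  rw [Finset.sum_image]
  intro a ha b hb h
  exact sigma_inj (hS ha) (hS hb) h

lemma Kf_rot_notmem {n : ℕ} {S : Finset ℕ} (hS : S ⊆ Icc 1 n) (hnS : n ∉ S) :
    Kf n (S.image (σf n)) + S.card = Kf n S := by
  rw [Kf_rot_eq_sum hS, Finset.card_eq_sum_ones, ← Finset.sum_add_distrib]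
  refine Finset.sum_congr rfl (fun j hj => ?_)
  have hjI := hS hj
  have hjn : j ≠ n := fun h => hnS (h ▸ hj)
  rw [c_sigma hS hjI, c_rot_notmem hS hjI hjn hnS]
  have hmem : n ∈ (Icc 1 n).filter (fun k => j < k ∧ k ∉ S) := by
    simp only [mem_filter, mem_Icc] at *
    exact ⟨⟨by omega, le_refl n⟩, by omega, hnS⟩
  rw [Finset.card_erase_of_mem hmem]
  have : 1 ≤ ((Icc 1 n).filter (fun k => j < k ∧ k ∉ S)).card :=
    Finset.card_pos.mpr ⟨n, hmem⟩
  unfold c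
  omega

lemma Kf_rot_mem {n : ℕ} {S : Finset ℕ} (hS : S ⊆ Icc 1 n) (hnS : n ∈ S) :
    Kf n (S.image (σf n)) = Kf n S + (n - S.card) := by
  rw [Kf_rot_eq_sum hS]
  have hL : ∑ j ∈ S, c n (σf n j) (S.image (σf n))
      = ∑ j ∈ S.erase n, c n (σf n j) (S.image (σf n))
        + c n (σf n n) (S.image (σf n)) := by
    rw [Finset.sum_erase_add S _ hnS]
  have hR : Kf n S = ∑ j ∈ S.erase n, c n j S := by
    unfold Kf
    rw [← Finset.sum_erase_add S _ hnS, c_top_zero, add_zero]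
  rw [hL, hR]
  congr 1
  · refine Finset.sum_congr rfl (fun j hj => ?_)
    have hjn := Finset.ne_of_mem_erase hj
    have hjS := Finset.mem_of_mem_erase hj
    rw [c_sigma hS (hS hjS), c_rot_lt hS (hS hjS) hjn hnS]
    rfl
  · have hnI : n ∈ Icc 1 n := by
      have := hS hnS; simp only [mem_Icc] at *; omega
    rw [c_sigma hS hnI, c_rot_top hS hnS, card_filter_notmem hS]

lemma image_rho_sigma {n : ℕ} {S : Finset ℕ} (hS : S ⊆ Icc 1 n) :
    (S.image (σf n)).image (ρf n) = S := by
  rw [Finset.image_image]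
  ext a
  simp only [Finset.mem_image, Function.comp_apply]
  constructor
  · rintro ⟨j, hj, rfl⟩; rwa [rho_sigma (hS hj)]
  · intro ha; exact ⟨a, ha, rho_sigma (hS ha)⟩

lemma image_sigma_rho {n : ℕ} {S : Finset ℕ} (hS : S ⊆ Icc 1 n) :
    (S.image (ρf n)).image (σf n) = S := by
  rw [Finset.image_image]
  ext a
  simp only [Finset.mem_image, Function.comp_apply]
  constructor
  · rintro ⟨j, hj, rfl⟩; rwa [sigma_rho (hS hj)]
  · intro ha; exact ⟨a, ha, sigma_rho (hS ha)⟩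

lemma image_rho_subset {n : ℕ} {S : Finset ℕ} (hS : S ⊆ Icc 1 n) :
    S.image (ρf n) ⊆ Icc 1 n := by
  intro k hk
  rw [Finset.mem_image] at hk
  obtain ⟨j, hj, rfl⟩ := hk
  exact rho_mem (hS hj)

lemma zeta_pow_rot (r q : ℕ) (hqr : q ≤ r) {S : Finset ℕ}
    (hS : S ∈ (Icc 1 (r + 1)).powersetCard q) :
    (ζ r) ^ Kf (r + 1) (S.image (σf (r + 1))) * (ζ r) ^ q = (ζ r) ^ Kf (r + 1) S := by
  rw [mem_powersetCard] at hS
  obtain ⟨hsub, hcard⟩ := hS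
  by_cases hn : (r + 1) ∈ S
  · rw [Kf_rot_mem hsub hn, hcard]
    rw [pow_add, mul_assoc, ← pow_add]
    have : r + 1 - q + q = r + 1 := by omega
    rw [this, zeta_pow_card, mul_one]
  · rw [← Kf_rot_notmem hsub hn, hcard, pow_add]

lemma f_base (r q : ℕ) (hq1 : 1 ≤ q) (hqr : q ≤ r) : f r (r + 1) q = 0 := by
  have key : f r (r + 1) q * (ζ r) ^ q = f r (r + 1) q := by
    conv_rhs => rw [f]
    have reindex : f r (r + 1) q
        = ∑ S ∈ (Icc 1 (r + 1)).powersetCard q, (ζ r) ^ Kf (r + 1) (S.image (σf (r + 1))) := by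
      rw [f]
      refine Finset.sum_nbij' (fun S => S.image (ρf (r + 1))) (fun S => S.image (σf (r + 1)))
        ?_ ?_ ?_ ?_ ?_
      · intro S hS
        rw [mem_powersetCard] at *
        refine ⟨image_rho_subset hS.1, ?_⟩
        rw [← hS.2]
        apply Finset.card_image_of_injOn
        intro a ha b hb h
        have ha' := hS.1 (Finset.mem_coe.mp ha)
        have hb' := hS.1 (Finset.mem_coe.mp hb)
        rw [← sigma_rho ha', ← sigma_rho hb', h]
      · intro S hS
        rw [mem_powersetCard] at *
        exact ⟨image_sigma_subset hS.1,
          by rw [Finset.card_image_of_injOn ((sigma_injOn _).mono hS.1), hS.2]⟩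
      · intro S hS
        rw [mem_powersetCard] at hS
        exact image_sigma_rho hS.1
      · intro S hS
        rw [mem_powersetCard] at hS
        exact image_rho_sigma hS.1
      · intro S hS
        rw [mem_powersetCard] at hS
        rw [image_sigma_rho hS.1]
    calc f r (r + 1) q * (ζ r) ^ q
        = ∑ S ∈ (Icc 1 (r + 1)).powersetCard q,
            (ζ r) ^ Kf (r + 1) (S.image (σf (r + 1))) * (ζ r) ^ q := by
          rw [reindex, Finset.sum_mul]
      _ = ∑ S ∈ (Icc 1 (r + 1)).powersetCard q, (ζ r) ^ Kf (r + 1) S :=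
          Finset.sum_congr rfl (fun S hS => zeta_pow_rot r q hqr hS)
  have h2 : f r (r + 1) q * ((ζ r) ^ q - 1) = 0 := by
    rw [mul_sub, key, mul_one, sub_self]
  rcases mul_eq_zero.mp h2 with h | h
  · exact h
  · exact absurd (sub_eq_zero.mp h) (zeta_pow_ne_one r q hq1 hqr)

lemma f_zero (r : ℕ) : ∀ m q : ℕ, 1 ≤ q → q ≤ r → m + 1 ≤ q → f r (r + 1 + m) q = 0 := by
  intro m
  induction m with
  | zero => intro q hq1 hqr _; exact f_base r q hq1 hqr
  | succ m ih =>
    intro q hq1 hqr hm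
    obtain ⟨q', rfl⟩ : ∃ q', q = q' + 1 := ⟨q - 1, by omega⟩
    have hn : r + 1 + (m + 1) = (r + 1 + m) + 1 := by omega
    rw [hn, f_rec]
    rw [ih q' (by omega) (by omega) (by omega), ih (q' + 1) (by omega) (by omega) (by omega)]
    simp

end Forrester

/-- Lemma 1 of Forrester: for `1 ≤ q ≤ r`, summing `exp(-2πi K(S)/(r+1))` over all
subsets `S` of `{1,…,r+q}` of cardinality `q` (positions of the ones), where `K(S)` is the
total number of zeros to the right of each one, gives zero. -/
theorem sum_exp_K_eq_zero (r q : ℕ) (hq1 : 1 ≤ q) (hqr : q ≤ r) :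
    ∑ S ∈ (Finset.Icc 1 (r + q)).powersetCard q,
      Complex.exp (-(2 * Real.pi * Complex.I *
        ((∑ j ∈ S, ((Finset.Icc 1 (r + q)).filter (fun k => j < k ∧ k ∉ S)).card : ℕ) : ℂ)
          / ((r : ℂ) + 1))) = 0 := by
  have h0 := Forrester.f_zero r (q - 1) q hq1 hqr (by omega)
  rw [show r + 1 + (q - 1) = r + q by omega] at h0
  refine Eq.trans ?_ h0
  unfold Forrester.f Forrester.Kf Forrester.c
  refine Finset.sum_congr rfl (fun S _ => ?_)
  rw [Forrester.ζ, ← Complex.exp_nat_mul]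
  congr 1
  ring
end

section
/- Let r, q be positive integers with 1 ≤ q ≤ r. Then Σ_S exp(−2πi·(Σ_{j ∈ S} (r+q−j))/(r+1)) = 0, where the sum is over all subsets S of {1, 2, ..., r+q} with |S| = q. -/
open Finset Polynomial

/-- For `1 ≤ q ≤ r`, `∑_S exp(-2πi (∑_{j∈S} (r+q-j))/(r+1)) = 0`, the sum being over all
subsets `S` of `{1,…,r+q}` with `|S| = q`. -/
theorem sum_exp_eq_zero (r q : ℕ) (hq1 : 1 ≤ q) (hqr : q ≤ r) :
    ∑ S ∈ (Finset.Icc 1 (r + q)).powersetCard q,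
      Complex.exp (-(2 * Real.pi * Complex.I *
        ((∑ j ∈ S, (r + q - j) : ℕ) : ℂ) / ((r : ℂ) + 1))) = 0 := by
  set n := r + q with hn
  set ζ : ℂ := Complex.exp (-(2 * Real.pi * Complex.I / (r + 1))) with hζdef
  have hr1 : ((r : ℂ) + 1) ≠ 0 := by
    exact_mod_cast Nat.cast_add_one_ne_zero (R := ℂ) r
  have hζ : IsPrimitiveRoot ζ (r + 1) := by
    have h := Complex.isPrimitiveRoot_exp (r + 1) (Nat.succ_ne_zero r)
    rw [Nat.cast_add, Nat.cast_one] at h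
    have : ζ = (Complex.exp (2 * Real.pi * Complex.I / ((r : ℂ) + 1)))⁻¹ := by
      rw [hζdef, ← Complex.exp_neg]
    rw [this]
    exact h.inv
  -- rewrite each summand as a product of powers of ζ
  have hsummand : ∀ S ∈ (Finset.Icc 1 n).powersetCard q,
      Complex.exp (-(2 * Real.pi * Complex.I *
        ((∑ j ∈ S, (n - j) : ℕ) : ℂ) / ((r : ℂ) + 1))) = ∏ j ∈ S, ζ ^ (n - j) := by
    intro S _
    rw [Finset.prod_pow_eq_pow_sum, hζdef, ← Complex.exp_nat_mul]
    congr 1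
    push_cast
    ring
  rw [Finset.sum_congr rfl hsummand]
  -- recognize the sum as a coefficient of a product polynomial
  have hcard : #(Finset.Icc 1 n) = n := by
    rw [Nat.card_Icc]; omega
  have hq' : n - r = q := by omega
  have hcoeff := Finset.prod_X_add_C_coeff (Finset.Icc 1 n)
      (fun j => ζ ^ (n - j)) (k := r) (by rw [hcard]; omega)
  rw [hcard, hq'] at hcoeff
  rw [← hcoeff]
  -- reindex the product over range n
  have hre : ∏ j ∈ Finset.Icc 1 n, (X + C (ζ ^ (n - j)))
      = ∏ j ∈ Finset.range n, (X + C (ζ ^ j)) := by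
    have : Finset.Icc 1 n = Finset.Ico 1 (n + 1) := by
      rw [Finset.Ico_add_one_right_eq_Icc]
    rw [this]
    have := Finset.prod_Ico_reflect (fun j => X + C (ζ ^ j)) 1 (m := n + 1) (n := n) le_rfl
    simp only [Nat.sub_self, Nat.add_sub_cancel] at this
    rw [this, Finset.range_eq_Ico]
  rw [hre]
  -- split the product
  have hsplit : n = (r + 1) + (q - 1) := by omega
  rw [hsplit, Finset.prod_range_add]
  -- the first factor is X^(r+1) - C((-1)^(r+1))
  have hfirst : ∏ i ∈ Finset.range (r + 1), (X + C (ζ ^ i))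
      = X ^ (r + 1) - C ((-1 : ℂ) ^ (r + 1)) := by
    rw [X_pow_sub_C_eq_prod hζ (Nat.succ_pos r) (rfl : ((-1 : ℂ)) ^ (r + 1) = _)]
    apply Finset.prod_congr rfl
    intro i _
    rw [mul_neg_one, map_neg, sub_neg_eq_add]
  rw [hfirst]
  -- the second factor has degree at most q - 1 < r
  set g : ℂ[X] := ∏ i ∈ Finset.range (q - 1), (X + C (ζ ^ (r + 1 + i))) with hg
  have hdeg : g.natDegree < r := by
    have h1 : g.natDegree ≤ ∑ i ∈ Finset.range (q - 1),
        (X + C (ζ ^ (r + 1 + i))).natDegree := Polynomial.natDegree_prod_le _ _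
    have h2 : ∀ i ∈ Finset.range (q - 1), (X + C (ζ ^ (r + 1 + i))).natDegree = 1 := by
      intro i _; exact Polynomial.natDegree_X_add_C _
    rw [Finset.sum_congr rfl h2, Finset.sum_const, smul_eq_mul, mul_one] at h1
    calc g.natDegree ≤ q - 1 := by simpa using h1
    _ < r := by omega
  -- compute the coefficient
  rw [sub_mul, Polynomial.coeff_sub]
  have hX : (X ^ (r + 1) * g).coeff r = 0 := by
    rw [mul_comm, Polynomial.coeff_mul_X_pow']
    simp
  have hC : (C ((-1 : ℂ) ^ (r + 1)) * g).coeff r = 0 := by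
    rw [Polynomial.coeff_C_mul, Polynomial.coeff_eq_zero_of_natDegree_lt hdeg, mul_zero]
  rw [hX, hC, sub_zero]
end

section
/- Let r, q be positive integers with 1 ≤ q ≤ r, and set ω = exp(−2πi/(r+1)). Then the coefficient of z^q in the polynomial ∏_{j=1}^{r+q} (1 + z·ω^{j−1}) is equal to 0. -/
open Finset Polynomial

/-- Product of `X - ζ^j` over `j < n` for a primitive `n`-th root of unity. -/
lemma prod_X_sub_pow_eq (n : ℕ) (hn : 0 < n) {ζ : ℂ} (h : IsPrimitiveRoot ζ n) :
    ∏ j ∈ Finset.range n, (Polynomial.X - Polynomial.C (ζ ^ j)) = Polynomial.X ^ n - 1 := by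
  have hmonic : (Polynomial.X ^ n - Polynomial.C (1 : ℂ)).Monic :=
    Polynomial.monic_X_pow_sub_C (1 : ℂ) hn.ne'
  have hroots : (Polynomial.X ^ n - Polynomial.C (1 : ℂ)).roots = Polynomial.nthRoots n 1 := rfl
  have hcard : Multiset.card (Polynomial.X ^ n - Polynomial.C (1 : ℂ)).roots
      = (Polynomial.X ^ n - Polynomial.C (1 : ℂ)).natDegree := by
    rw [hroots, h.card_nthRoots_one, Polynomial.natDegree_X_pow_sub_C]
  have hp := Polynomial.prod_multiset_X_sub_C_of_monic_of_roots_card_eq hmonic hcard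
  have he : Polynomial.nthRoots n (1 : ℂ) = (Multiset.range n).map (fun j => ζ ^ j * 1) :=
    h.nthRoots_eq (one_pow n)
  calc ∏ j ∈ Finset.range n, (Polynomial.X - Polynomial.C (ζ ^ j))
      = (Multiset.map (fun a => Polynomial.X - Polynomial.C a)
          (Polynomial.X ^ n - Polynomial.C (1 : ℂ)).roots).prod := by
        rw [hroots, he, Multiset.map_map]
        simp only [Function.comp, mul_one]
        rfl
    _ = Polynomial.X ^ n - Polynomial.C (1 : ℂ) := hp
    _ = Polynomial.X ^ n - 1 := by rw [Polynomial.C_1]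

lemma prod_X_add_pow_eq (n : ℕ) (hn : 0 < n) {ζ : ℂ} (h : IsPrimitiveRoot ζ n) :
    ∏ j ∈ Finset.range n, (Polynomial.X + Polynomial.C (ζ ^ j))
      = Polynomial.X ^ n - Polynomial.C ((-1 : ℂ) ^ n) := by
  have key := congrArg (fun p => Polynomial.comp p (-Polynomial.X))
    (prod_X_sub_pow_eq n hn h)
  simp only [Polynomial.prod_comp, Polynomial.sub_comp, Polynomial.X_comp,
    Polynomial.C_comp, Polynomial.pow_comp, Polynomial.one_comp] at key
  have hfac : ∀ j : ℕ, -Polynomial.X - Polynomial.C (ζ ^ j)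
      = (-1 : ℂ[X]) * (Polynomial.X + Polynomial.C (ζ ^ j)) := by
    intro j; ring
  rw [Finset.prod_congr rfl (fun j _ => hfac j), Finset.prod_mul_distrib,
    Finset.prod_const, Finset.card_range] at key
  have hneg : ((-1 : ℂ[X]) ^ n) = Polynomial.C ((-1 : ℂ) ^ n) := by
    rw [map_pow, Polynomial.C_neg, Polynomial.C_1]
  rw [hneg] at key
  have h2 : Polynomial.C ((-1 : ℂ) ^ n) * (Polynomial.C ((-1 : ℂ) ^ n) *
      ∏ j ∈ Finset.range n, (Polynomial.X + Polynomial.C (ζ ^ j)))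
      = Polynomial.C ((-1 : ℂ) ^ n) * ((-Polynomial.X) ^ n - 1) := by rw [key]
  rw [← mul_assoc, ← Polynomial.C_mul, ← pow_add, ← two_mul, pow_mul, neg_one_sq, one_pow,
    Polynomial.C_1, one_mul] at h2
  rw [h2, neg_pow (Polynomial.X : Polynomial ℂ), ← hneg, mul_sub, ← mul_assoc, ← pow_add, ← two_mul, pow_mul,
    neg_one_sq, one_pow, one_mul, mul_one, hneg]

/-- `∏_{j<n} (1 + ζ^j X)` has only coefficients in degrees `0` and `n`. -/
lemma prod_one_add_pow_eq (n : ℕ) (hn : 0 < n) {ζ : ℂ} (h : IsPrimitiveRoot ζ n) :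
    ∏ j ∈ Finset.range n, (1 + Polynomial.C (ζ ^ j) * Polynomial.X)
      = Polynomial.C (∏ j ∈ Finset.range n, ζ ^ j) *
        (Polynomial.X ^ n - Polynomial.C ((-1 : ℂ) ^ n)) := by
  have hz : ζ ≠ 0 := h.ne_zero hn.ne'
  have hfac : ∀ j ∈ Finset.range n, (1 : ℂ[X]) + Polynomial.C (ζ ^ j) * Polynomial.X
      = Polynomial.C (ζ ^ j) * (Polynomial.X + Polynomial.C ((ζ⁻¹) ^ j)) := by
    intro j _
    rw [mul_add, ← Polynomial.C_mul, ← mul_pow, mul_inv_cancel₀ hz, one_pow, Polynomial.C_1]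
    ring
  rw [Finset.prod_congr rfl hfac, Finset.prod_mul_distrib, ← map_prod,
    prod_X_add_pow_eq n hn h.inv]

/-- For `1 ≤ q ≤ r` and `ω = exp(-2πi/(r+1))`, the coefficient of `z^q` in
`∏_{j=1}^{r+q} (1 + z ω^{j-1})` vanishes. -/
theorem coeff_q_eq_zero (r q : ℕ) (hq1 : 1 ≤ q) (hqr : q ≤ r) :
    (∏ j ∈ Finset.range (r + q),
      (1 + Polynomial.C (Complex.exp (-(2 * Real.pi * Complex.I) / ((r : ℂ) + 1)) ^ j) *
        Polynomial.X)).coeff q = 0 := by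
  set ζ : ℂ := Complex.exp (-(2 * Real.pi * Complex.I) / ((r : ℂ) + 1)) with hζ
  have hprim : IsPrimitiveRoot ζ (r + 1) := by
    have h0 := (Complex.isPrimitiveRoot_exp (r + 1) (Nat.succ_ne_zero r)).inv
    have heq : ζ = (Complex.exp (2 * Real.pi * Complex.I / ((r + 1 : ℕ) : ℂ)))⁻¹ := by
      rw [hζ, ← Complex.exp_neg, neg_div]
      push_cast
      ring_nf
    rw [heq]; exact h0
  have hsplit : r + q = (r + 1) + (q - 1) := by omega
  rw [hsplit, Finset.prod_range_add, prod_one_add_pow_eq (r + 1) (Nat.succ_pos r) hprim]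
  set P2 : Polynomial ℂ := ∏ i ∈ Finset.range (q - 1),
    (1 + Polynomial.C (ζ ^ (r + 1 + i)) * Polynomial.X) with hP2
  have hdeg : P2.natDegree < q := by
    have h1 : P2.natDegree ≤ ∑ i ∈ Finset.range (q - 1),
        (1 + Polynomial.C (ζ ^ (r + 1 + i)) * Polynomial.X).natDegree :=
      Polynomial.natDegree_prod_le _ _
    have h2 : ∀ i ∈ Finset.range (q - 1),
        (1 + Polynomial.C (ζ ^ (r + 1 + i)) * Polynomial.X).natDegree ≤ 1 := by
      intro i _
      refine (Polynomial.natDegree_add_le _ _).trans (max_le (by simp) ?_)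
      exact (Polynomial.natDegree_C_mul_le _ _).trans (le_of_eq Polynomial.natDegree_X)
    have h3 : ∑ i ∈ Finset.range (q - 1),
        (1 + Polynomial.C (ζ ^ (r + 1 + i)) * Polynomial.X).natDegree ≤ q - 1 := by
      calc _ ≤ ∑ _i ∈ Finset.range (q - 1), 1 := Finset.sum_le_sum h2
        _ = q - 1 := by simp
    omega
  have hc2 : P2.coeff q = 0 := Polynomial.coeff_eq_zero_of_natDegree_lt hdeg
  have hc3 : (Polynomial.X ^ (r + 1) * P2).coeff q = 0 := by
    rw [mul_comm, Polynomial.coeff_mul_X_pow']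
    rw [if_neg (by omega)]
  rw [mul_assoc, Polynomial.coeff_C_mul, sub_mul, Polynomial.coeff_sub, hc3,
    Polynomial.coeff_C_mul, hc2, mul_zero, sub_zero, mul_zero]
end

section
/- (even(OE_N ∪ OE_N) = UE_N for the one-edge Jacobi weight, as a density identity.) Let N ≥ 1 be an integer and let b > −1 be real. There exists a constant c > 0, independent of the μ_j, such that for all 1 > μ_1 > μ_2 > ... > μ_N > 0, the integral over the region {1 > λ_1 > μ_1 > λ_2 > μ_2 > ... > λ_N > μ_N > 0} of ∏_{l=1}^{N} (1−λ_l)^{(b−1)/2} · ∏_{1 ≤ j < k ≤ N} (λ_j − λ_k) dλ, multiplied by ∏_{l=1}^{N} (1−μ_l)^{(b−1)/2} · ∏_{1 ≤ j < k ≤ N} (μ_j − μ_k), equals c · ∏_{l=1}^{N} (1−μ_l)^{b} · ∏_{1 ≤ j < k ≤ N} (μ_j − μ_k)². In words: superimpose two independent samples of OE_N((1−x)^{(b−1)/2}); then the joint distribution of every second point (in decreasing order, positions 2, 4, ..., 2N of the 2N points) is that of UE_N((1−x)^b). -/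
open MeasureTheory Finset

section EsjAux

noncomputable def esjF (b : ℝ) (k : ℕ) (x : ℝ) : ℝ :=
  (1 - x) ^ ((b - 1) / 2) * (x ^ k - ((k : ℝ) / ((b + 1) / 2 + k)) * x ^ (k - 1))

noncomputable def esjG (b : ℝ) (k : ℕ) (x : ℝ) : ℝ :=
  -(((b + 1) / 2 + k)⁻¹ * ((1 - x) ^ ((b + 1) / 2) * x ^ k))

def esjA (μ : ℕ → ℝ) (N : ℕ) : Fin N → ℝ := fun j => μ (j.val + 1)

noncomputable def esjB (μ : ℕ → ℝ) (N : ℕ) : Fin N → ℝ :=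
  fun j => if j.val = 0 then 1 else μ j.val

noncomputable def esjSign (N : ℕ) : ℝ := ∏ j : Fin N, ∏ _k ∈ Finset.Ioi j, (-1 : ℝ)

lemma esj_ck_pos {b : ℝ} (hb : -1 < b) (k : ℕ) : 0 < (b + 1) / 2 + k := by
  have : (0:ℝ) ≤ k := Nat.cast_nonneg k
  linarith

lemma esjG_one {b : ℝ} (hb : -1 < b) (k : ℕ) : esjG b k 1 = 0 := by
  simp [esjG, Real.zero_rpow (show ((b+1)/2 : ℝ) ≠ 0 from ne_of_gt (by linarith))]

lemma esjG_cont {b : ℝ} (hb : -1 < b) (k : ℕ) : Continuous (esjG b k) := by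
  have h1 : Continuous fun x : ℝ => (1 - x) ^ ((b + 1) / 2) := by
    rw [continuous_iff_continuousAt]
    intro x
    exact (Real.continuousAt_rpow_const _ _ (Or.inr (by linarith))).comp
      ((continuous_const.sub continuous_id).continuousAt)
  exact (continuous_const.mul (h1.mul (continuous_pow k))).neg

lemma esjG_hasDerivAt {b : ℝ} (hb : -1 < b) (k : ℕ) {x : ℝ} (hx : x < 1) :
    HasDerivAt (esjG b k) (esjF b k x) x := by
  have h1x : (0:ℝ) < 1 - x := by linarith
  set P : ℝ := (b + 1) / 2 with hP
  have hPpos : 0 < P := by rw [hP]; linarith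
  have hck := esj_ck_pos hb k
  have hc : ((b+1)/2 + (k:ℝ)) ≠ 0 := ne_of_gt hck
  have h2 : HasDerivAt (fun y : ℝ => 1 - y) (-1) x := by
    exact (hasDerivAt_id' x).const_sub 1
  have h3 : HasDerivAt (fun y : ℝ => (1 - y) ^ P) (P * (1 - x) ^ (P - 1) * (-1)) x :=
    (Real.hasDerivAt_rpow_const (Or.inl (ne_of_gt h1x))).comp x h2
  have h4 : HasDerivAt (fun y : ℝ => y ^ k) ((k : ℝ) * x ^ (k - 1)) x := hasDerivAt_pow k x
  have h5 := (h3.mul h4).const_mul (((b + 1) / 2 + (k:ℝ))⁻¹)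
  have h6 := h5.neg
  convert h6 using 1
  · rfl
  · rfl
  · funext y; rfl
  have hsplit : (1 - x) ^ P = (1 - x) ^ (P - 1) * (1 - x) := by
    rw [← Real.rpow_add_one (ne_of_gt h1x)]
    ring_nf
  have hxk : (k : ℝ) * x ^ (k - 1) * x = (k : ℝ) * x ^ k := by
    cases k with
    | zero => simp
    | succ m => simp only [Nat.add_sub_cancel, pow_succ]; ring
  have hinv : ((b+1)/2 + (k:ℝ)) * ((b+1)/2 + (k:ℝ))⁻¹ = 1 := mul_inv_cancel₀ hc
  have hPb : P - 1 = (b - 1) / 2 := by rw [hP]; ring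
  simp only [esjF]
  rw [← hPb, hsplit]
  linear_combination (-(((b+1)/2 + (k:ℝ))⁻¹ * (1-x) ^ (P-1))) * hxk
    - ((1-x) ^ (P-1) * x ^ k) * hinv

lemma esjF_intervalIntegrable {b : ℝ} (hb : -1 < b) (k : ℕ) (a B : ℝ) :
    IntervalIntegrable (esjF b k) volume a B := by
  have h0 : IntervalIntegrable (fun x : ℝ => x ^ ((b - 1) / 2)) volume (1 - a) (1 - B) :=
    intervalIntegral.intervalIntegrable_rpow' (by linarith)
  have h1 : IntervalIntegrable (fun x : ℝ => (1 - x) ^ ((b - 1) / 2)) volume a B := by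
    simpa using h0.comp_sub_left 1
  have h2 : ContinuousOn (fun x : ℝ => x ^ k - ((k : ℝ) / ((b + 1) / 2 + k)) * x ^ (k - 1))
      (Set.uIcc a B) := (Continuous.continuousOn (by continuity))
  exact h1.mul_continuousOn h2

lemma esjF_integrableOn {b : ℝ} (hb : -1 < b) (k : ℕ) {a B : ℝ} (hab : a ≤ B) :
    IntegrableOn (esjF b k) (Set.Ioo a B) volume :=
  (intervalIntegrable_iff_integrableOn_Ioo_of_le hab).mp (esjF_intervalIntegrable hb k a B)

lemma esjF_integral {b : ℝ} (hb : -1 < b) (k : ℕ) {a B : ℝ} (hab : a ≤ B) (hB : B ≤ 1) :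
    ∫ x in Set.Ioo a B, esjF b k x = esjG b k B - esjG b k a := by
  have h1 : ∫ x in Set.Ioo a B, esjF b k x = ∫ x in a..B, esjF b k x := by
    rw [intervalIntegral.integral_of_le hab, MeasureTheory.integral_Ioc_eq_integral_Ioo]
  rw [h1]
  exact intervalIntegral.integral_eq_sub_of_hasDerivAt_of_le hab
    ((esjG_cont hb k).continuousOn)
    (fun x hx => esjG_hasDerivAt hb k (lt_of_lt_of_le hx.2 hB))
    (esjF_intervalIntegrable hb k a B)

lemma esj_restrict_pi_pi {N : ℕ} (s : Fin N → Set ℝ) (hs : ∀ i, MeasurableSet (s i)) :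
    (volume : Measure (Fin N → ℝ)).restrict (Set.pi Set.univ s)
      = Measure.pi (fun i => volume.restrict (s i)) := by
  refine (Measure.pi_eq fun t ht => ?_).symm
  rw [Measure.restrict_apply (MeasurableSet.univ_pi ht), ← Set.pi_inter_distrib]
  rw [volume_pi, Measure.pi_pi]
  exact Finset.prod_congr rfl fun i _ => (Measure.restrict_apply (ht i)).symm

lemma esj_integral_pi_prod {N : ℕ} (ρ : Fin N → Measure ℝ) (inst : ∀ j, SigmaFinite (ρ j))
    (g : Fin N → ℝ → ℝ) :
    ∫ l : Fin N → ℝ, ∏ j, g j (l j) ∂(Measure.pi ρ) = ∏ j, ∫ x, g j x ∂(ρ j) :=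
  by haveI := inst; exact MeasureTheory.integral_fintype_prod_eq_prod (μ := ρ) g

lemma esj_integrable_pi_prod {N : ℕ} (ρ : Fin N → Measure ℝ) (inst : ∀ j, SigmaFinite (ρ j))
    (g : Fin N → ℝ → ℝ) (hg : ∀ j, Integrable (g j) (ρ j)) :
    Integrable (fun l : Fin N → ℝ => ∏ j, g j (l j)) (Measure.pi ρ) :=
  by haveI := inst; exact MeasureTheory.Integrable.fintype_prod_dep (μ := ρ) hg

lemma esj_andreief {N : ℕ} (ρ : Fin N → Measure ℝ) (hfin : ∀ j, IsFiniteMeasure (ρ j))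
    (F : Fin N → ℝ → ℝ) (hF : ∀ k j, Integrable (F k) (ρ j)) :
    ∫ l : Fin N → ℝ, Matrix.det (Matrix.of fun j k : Fin N => F k (l j)) ∂(Measure.pi ρ)
      = Matrix.det (Matrix.of fun j k : Fin N => ∫ x, F k x ∂(ρ j)) := by
  haveI := hfin
  have hsf : ∀ j, SigmaFinite (ρ j) := fun j => inferInstance
  have hrew : ∀ (σ : Equiv.Perm (Fin N)) (l : Fin N → ℝ),
      (∏ k, F k (l (σ k))) = ∏ j, F (σ.symm j) (l j) := by
    intro σ l
    rw [← Equiv.prod_comp σ (fun j => F (σ.symm j) (l j))]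
    simp
  simp_rw [Matrix.det_apply', Matrix.of_apply]
  rw [integral_finset_sum]
  · refine Finset.sum_congr rfl fun σ _ => ?_
    rw [integral_const_mul]
    congr 1
    calc ∫ l : Fin N → ℝ, ∏ k, F k (l (σ k)) ∂(Measure.pi ρ)
        = ∫ l : Fin N → ℝ, ∏ j, F (σ.symm j) (l j) ∂(Measure.pi ρ) := by simp_rw [hrew]
      _ = ∏ j, ∫ x, F (σ.symm j) x ∂(ρ j) := esj_integral_pi_prod ρ hsf _
      _ = ∏ k, ∫ x, F k x ∂(ρ (σ k)) := by
          rw [← Equiv.prod_comp σ (fun j => ∫ x, F (σ.symm j) x ∂(ρ j))]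
          simp
  · intro σ _
    apply Integrable.const_mul
    have heq : (fun l : Fin N → ℝ => ∏ k, F k (l (σ k)))
        = fun l => ∏ j, F (σ.symm j) (l j) := funext (hrew σ)
    rw [heq]
    exact esj_integrable_pi_prod ρ hsf _ (fun j => hF _ j)

def esjEmb (N : ℕ) : Fin N ↪ ℕ :=
  ⟨fun j => j.val + 1, by intro a b h; simpa [Fin.ext_iff] using h⟩

@[simp] lemma esjEmb_apply (N : ℕ) (j : Fin N) : esjEmb N j = j.val + 1 := rfl

lemma esj_map_univ (N : ℕ) : Finset.univ.map (esjEmb N) = Finset.Icc 1 N := by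
  ext a
  simp only [Finset.mem_map, Finset.mem_univ, true_and, Finset.mem_Icc, esjEmb_apply]
  constructor
  · rintro ⟨j, rfl⟩; omega
  · rintro ⟨h1, h2⟩; exact ⟨⟨a - 1, by omega⟩, by simp; omega⟩

lemma esj_map_Ioi {N : ℕ} (j : Fin N) :
    (Finset.Ioi j).map (esjEmb N) = Finset.Icc (j.val + 1 + 1) N := by
  ext a
  simp only [Finset.mem_map, Finset.mem_Ioi, Finset.mem_Icc, esjEmb_apply, Fin.lt_def]
  constructor
  · rintro ⟨k, hk, rfl⟩; omega
  · rintro ⟨h1, h2⟩; exact ⟨⟨a - 1, by omega⟩, by simp; omega, by simp; omega⟩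

lemma esj_prod_Icc (N : ℕ) (f : ℕ → ℝ) :
    ∏ p ∈ Finset.Icc 1 N, f p = ∏ j : Fin N, f (j.val + 1) := by
  rw [← esj_map_univ, Finset.prod_map]; rfl

lemma esj_prod_prod_Icc (N : ℕ) (f : ℕ → ℕ → ℝ) :
    ∏ p ∈ Finset.Icc 1 N, ∏ q ∈ Finset.Icc (p + 1) N, f p q
      = ∏ j : Fin N, ∏ k ∈ Finset.Ioi j, f (j.val + 1) (k.val + 1) := by
  rw [esj_prod_Icc N (fun p => ∏ q ∈ Finset.Icc (p + 1) N, f p q)]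
  refine Finset.prod_congr rfl fun j _ => ?_
  rw [← esj_map_Ioi j, Finset.prod_map]; rfl

lemma esj_filter_eq_Ioi {N : ℕ} (j : Fin N) :
    Finset.univ.filter (fun k => j < k) = Finset.Ioi j := by
  ext k; simp

noncomputable def esjP (b : ℝ) (k : ℕ) : Polynomial ℝ :=
  Polynomial.X ^ k - Polynomial.C ((k : ℝ) / ((b + 1) / 2 + k)) * Polynomial.X ^ (k - 1)

lemma esjP_eval (b : ℝ) (k : ℕ) (x : ℝ) :
    (esjP b k).eval x = x ^ k - ((k : ℝ) / ((b + 1) / 2 + k)) * x ^ (k - 1) := by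
  simp [esjP]

lemma esjP_deg_lt (b : ℝ) {k : ℕ} (hk : 0 < k) :
    (Polynomial.C ((k : ℝ) / ((b + 1) / 2 + k)) * Polynomial.X ^ (k - 1)).degree
      < (k : WithBot ℕ) := by
  apply lt_of_le_of_lt (Polynomial.degree_mul_le _ _)
  apply lt_of_le_of_lt (add_le_add Polynomial.degree_C_le le_rfl)
  rw [zero_add, Polynomial.degree_X_pow]
  exact_mod_cast Nat.sub_lt hk one_pos

lemma esjP_monic (b : ℝ) (k : ℕ) : (esjP b k).Monic := by
  rcases Nat.eq_zero_or_pos k with hk | hk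
  · subst hk; simp [esjP, Polynomial.monic_one]
  · exact Polynomial.monic_X_pow_sub (esjP_deg_lt b hk)

lemma esjP_natDegree (b : ℝ) (k : ℕ) : (esjP b k).natDegree = k := by
  rcases Nat.eq_zero_or_pos k with hk | hk
  · subst hk; simp [esjP]
  · have h1 : (Polynomial.C ((k : ℝ) / ((b + 1) / 2 + k)) * Polynomial.X ^ (k - 1)).natDegree
        < (Polynomial.X ^ k : Polynomial ℝ).natDegree := by
      rw [Polynomial.natDegree_X_pow]
      refine lt_of_le_of_lt (le_trans Polynomial.natDegree_mul_le ?_) (show k - 1 < k by omega)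
      simp [Polynomial.natDegree_X_pow]
    rw [esjP, Polynomial.natDegree_sub_eq_left_of_natDegree_lt h1, Polynomial.natDegree_X_pow]

lemma esj_det_q {N : ℕ} (b : ℝ) (v : Fin N → ℝ) :
    Matrix.det (Matrix.of fun j k : Fin N =>
        v j ^ (k.val) - ((k.val : ℝ) / ((b + 1) / 2 + k.val)) * v j ^ (k.val - 1))
      = Matrix.det (Matrix.vandermonde v) := by
  have h := Matrix.det_eval_matrixOfPolynomials_eq_det_vandermonde v (fun k => esjP b k.val)
    (fun k => esjP_natDegree b k.val) (fun k => esjP_monic b k.val)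
  rw [h]
  congr 1
  ext j k
  simp [esjP_eval]

end EsjAux

/-- `even(OE_N ∪ OE_N) = UE_N` for the one-edge Jacobi weight, as a density identity:
integrating the interlacing odd-position points `λ` against the superposition density of
two copies of `OE_N((1-x)^{(b-1)/2})` yields the `UE_N((1-x)^b)` density in the
even-position points `μ`, up to a constant. -/
theorem even_superposition_jacobi_one_edge (N : ℕ) (hN : 1 ≤ N) (b : ℝ) (hb : -1 < b) :
    ∃ c : ℝ, 0 < c ∧ ∀ μ : ℕ → ℝ, μ 1 < 1 → 0 < μ N →
      (∀ j, 1 ≤ j → j < N → μ (j + 1) < μ j) →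
      (∫ l in {l : Fin N → ℝ |
          l ⟨0, hN⟩ < 1 ∧
          ∀ j : Fin N,
            (1 ≤ j.val → l j < μ j.val) ∧ μ (j.val + 1) < l j},
        (∏ j : Fin N, (1 - l j) ^ ((b - 1) / 2)) *
          ∏ j : Fin N, ∏ k ∈ Finset.univ.filter (fun k => j < k), (l j - l k)) *
      ((∏ p ∈ Finset.Icc 1 N, (1 - μ p) ^ ((b - 1) / 2)) *
        ∏ p ∈ Finset.Icc 1 N, ∏ q ∈ Finset.Icc (p + 1) N, (μ p - μ q)) =
      c * (∏ p ∈ Finset.Icc 1 N, (1 - μ p) ^ b) *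
        ∏ p ∈ Finset.Icc 1 N, ∏ q ∈ Finset.Icc (p + 1) N, (μ p - μ q) ^ 2 := by
  obtain ⟨n, rfl⟩ : ∃ n, N = n + 1 := ⟨N - 1, by omega⟩
  refine ⟨∏ k : Fin (n + 1), ((b + 1) / 2 + (k.val : ℝ))⁻¹,
    Finset.prod_pos (fun k _ => inv_pos.mpr (esj_ck_pos hb k.val)), ?_⟩
  intro μ hμ1 hμN hmono
  -- basic order facts
  have hle : ∀ p q, 1 ≤ p → p ≤ q → q ≤ n + 1 → μ q ≤ μ p := by
    intro p q hp hpq hq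
    induction q with
    | zero => omega
    | succ m ih =>
      rcases Nat.lt_or_ge p (m + 1) with h | h
      · have hm1 : 1 ≤ m := by omega
        calc μ (m + 1) ≤ μ m := le_of_lt (hmono m hm1 (by omega))
          _ ≤ μ p := ih (by omega) (by omega)
      · have : p = m + 1 := by omega
        rw [this]
  have hlt1 : ∀ p, 1 ≤ p → p ≤ n + 1 → μ p < 1 :=
    fun p hp hpN => lt_of_le_of_lt (hle 1 p le_rfl hp hpN) hμ1
  have hAB : ∀ j : Fin (n + 1), esjA μ (n + 1) j < esjB μ (n + 1) j := by
    intro j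
    by_cases h0 : j.val = 0
    · simp only [esjA, esjB, h0, if_pos]
      simpa [h0] using hμ1
    · simp only [esjA, esjB, if_neg h0]
      exact hmono j.val (by omega) j.isLt
  have hA1 : ∀ j : Fin (n + 1), esjA μ (n + 1) j ≤ esjB μ (n + 1) j := fun j => le_of_lt (hAB j)
  have hB1 : ∀ j : Fin (n + 1), esjB μ (n + 1) j ≤ 1 := by
    intro j
    by_cases h0 : j.val = 0
    · simp [esjB, h0]
    · simp only [esjB, if_neg h0]
      exact le_of_lt (hlt1 j.val (by omega) (by omega))
  -- the region is a product of intervals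
  have hsetEq : {l : Fin (n + 1) → ℝ |
        l ⟨0, hN⟩ < 1 ∧
        ∀ j : Fin (n + 1), (1 ≤ j.val → l j < μ j.val) ∧ μ (j.val + 1) < l j}
      = Set.pi Set.univ fun j => Set.Ioo (esjA μ (n + 1) j) (esjB μ (n + 1) j) := by
    ext l
    simp only [Set.mem_setOf_eq, Set.mem_pi, Set.mem_univ, Set.mem_Ioo, forall_const]
    constructor
    · rintro ⟨h0, h⟩ j
      refine ⟨(h j).2, ?_⟩
      by_cases hj : j.val = 0
      · have hj' : j = ⟨0, hN⟩ := Fin.ext (by simp [hj])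
        simp only [esjB, hj, if_pos]
        rw [hj']
        exact h0
      · simp only [esjB, if_neg hj]
        exact (h j).1 (by omega)
    · intro h
      constructor
      · have h2 := (h ⟨0, hN⟩).2
        simpa [esjB] using h2
      · intro j
        refine ⟨fun h1j => ?_, (h j).1⟩
        have h2 := (h j).2
        simp only [esjB, if_neg (by omega : ¬ j.val = 0)] at h2
        exact h2
  -- measures
  have hfin : ∀ j : Fin (n + 1),
      IsFiniteMeasure (volume.restrict (Set.Ioo (esjA μ (n + 1) j) (esjB μ (n + 1) j))) := by
    intro j
    constructor
    rw [Measure.restrict_apply_univ]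
    exact measure_Ioo_lt_top
  have hFint : ∀ k j : Fin (n + 1), Integrable (esjF b k.val)
      (volume.restrict (Set.Ioo (esjA μ (n + 1) j) (esjB μ (n + 1) j))) :=
    fun k j => esjF_integrableOn hb k.val (hA1 j)
  have hres := esj_restrict_pi_pi (fun j => Set.Ioo (esjA μ (n + 1) j) (esjB μ (n + 1) j))
    (fun j => measurableSet_Ioo)
  -- pointwise integrand identity
  have hint : ∀ l : Fin (n + 1) → ℝ,
      (∏ j : Fin (n + 1), (1 - l j) ^ ((b - 1) / 2)) *
        ∏ j : Fin (n + 1), ∏ k ∈ Finset.univ.filter (fun k => j < k), (l j - l k)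
      = esjSign (n + 1) * Matrix.det (Matrix.of fun j k : Fin (n + 1) => esjF b k.val (l j)) := by
    intro l
    have h1 : (∏ j : Fin (n + 1), ∏ k ∈ Finset.univ.filter (fun k => j < k), (l j - l k))
        = esjSign (n + 1) * Matrix.det (Matrix.vandermonde l) := by
      rw [Matrix.det_vandermonde, esjSign, ← Finset.prod_mul_distrib]
      refine Finset.prod_congr rfl fun j _ => ?_
      rw [esj_filter_eq_Ioi, ← Finset.prod_mul_distrib]
      refine Finset.prod_congr rfl fun k _ => ?_
      ring
    have h2 : (∏ j : Fin (n + 1), (1 - l j) ^ ((b - 1) / 2)) * Matrix.det (Matrix.vandermonde l)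
        = Matrix.det (Matrix.of fun j k : Fin (n + 1) => esjF b k.val (l j)) := by
      rw [← esj_det_q b l]
      rw [show (Matrix.of fun j k : Fin (n + 1) => esjF b k.val (l j))
          = Matrix.of (fun j k : Fin (n + 1) => (1 - l j) ^ ((b - 1) / 2) *
              (Matrix.of fun j' k' : Fin (n + 1) =>
                l j' ^ (k'.val) - ((k'.val : ℝ) / ((b + 1) / 2 + k'.val)) * l j' ^ (k'.val - 1))
                j k) from by
            ext j k
            simp [esjF]]
      rw [Matrix.det_mul_column]
    rw [h1, ← h2]
    ring
  -- the matrix of integrals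
  have hval : (Matrix.of fun j k : Fin (n + 1) => ∫ x, esjF b k.val x
        ∂(volume.restrict (Set.Ioo (esjA μ (n + 1) j) (esjB μ (n + 1) j))))
      = Matrix.of fun j k : Fin (n + 1) =>
          esjG b k.val (esjB μ (n + 1) j) - esjG b k.val (esjA μ (n + 1) j) := by
    ext j k
    simp only [Matrix.of_apply]
    exact esjF_integral hb k.val (hA1 j) (hB1 j)
  -- row operations
  have hrow : Matrix.det (Matrix.of fun j k : Fin (n + 1) =>
        esjG b k.val (esjB μ (n + 1) j) - esjG b k.val (esjA μ (n + 1) j))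
      = Matrix.det (Matrix.of fun j k : Fin (n + 1) => -esjG b k.val (esjA μ (n + 1) j)) := by
    refine (Matrix.det_eq_of_forall_row_eq_smul_add_pred (c := fun _ => (1:ℝ)) ?_ ?_).symm
    · intro k
      simp only [Matrix.of_apply]
      have hB0 : esjB μ (n + 1) 0 = 1 := by simp [esjB]
      rw [hB0, esjG_one hb]
      ring
    · intro i k
      simp only [Matrix.of_apply]
      have h12 : esjB μ (n + 1) i.succ = esjA μ (n + 1) i.castSucc := by
        simp [esjB, esjA, Fin.val_succ, Fin.coe_castSucc]
      rw [h12]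
      ring
  -- evaluation of the final determinant
  have hT : Matrix.det (Matrix.of fun j k : Fin (n + 1) => -esjG b k.val (esjA μ (n + 1) j))
      = (∏ j : Fin (n + 1), (1 - esjA μ (n + 1) j) ^ ((b + 1) / 2)) *
        ((∏ k : Fin (n + 1), ((b + 1) / 2 + (k.val : ℝ))⁻¹) *
          Matrix.det (Matrix.vandermonde (esjA μ (n + 1)))) := by
    rw [show (Matrix.of fun j k : Fin (n + 1) => -esjG b k.val (esjA μ (n + 1) j))
        = Matrix.of (fun j k : Fin (n + 1) => (1 - esjA μ (n + 1) j) ^ ((b + 1) / 2) *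
            (Matrix.of (fun j' k' : Fin (n + 1) => ((b + 1) / 2 + (k'.val : ℝ))⁻¹ *
              Matrix.vandermonde (esjA μ (n + 1)) j' k')) j k) from by
          ext j k
          simp [esjG, Matrix.vandermonde]
          ring]
    rw [Matrix.det_mul_column, Matrix.det_mul_row]
  have hvandA : Matrix.det (Matrix.vandermonde (esjA μ (n + 1)))
      = esjSign (n + 1) *
        ∏ p ∈ Finset.Icc 1 (n + 1), ∏ q ∈ Finset.Icc (p + 1) (n + 1), (μ p - μ q) := by
    rw [Matrix.det_vandermonde, esjSign,
      esj_prod_prod_Icc (n + 1) (fun p q => μ p - μ q), ← Finset.prod_mul_distrib]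
    refine Finset.prod_congr rfl fun j _ => ?_
    rw [← Finset.prod_mul_distrib]
    refine Finset.prod_congr rfl fun k _ => ?_
    simp only [esjA]
    ring
  have hε2 : esjSign (n + 1) * esjSign (n + 1) = 1 := by
    rw [esjSign, ← Finset.prod_mul_distrib]
    refine Finset.prod_eq_one fun j _ => ?_
    rw [← Finset.prod_mul_distrib]
    exact Finset.prod_eq_one fun k _ => by norm_num
  have hAprod : (∏ j : Fin (n + 1), (1 - esjA μ (n + 1) j) ^ ((b + 1) / 2))
      = ∏ p ∈ Finset.Icc 1 (n + 1), (1 - μ p) ^ ((b + 1) / 2) := by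
    rw [esj_prod_Icc (n + 1) (fun p => (1 - μ p) ^ ((b + 1) / 2))]
    rfl
  -- compute the integral
  have hI : (∫ l in {l : Fin (n + 1) → ℝ |
          l ⟨0, hN⟩ < 1 ∧
          ∀ j : Fin (n + 1),
            (1 ≤ j.val → l j < μ j.val) ∧ μ (j.val + 1) < l j},
        (∏ j : Fin (n + 1), (1 - l j) ^ ((b - 1) / 2)) *
          ∏ j : Fin (n + 1), ∏ k ∈ Finset.univ.filter (fun k => j < k), (l j - l k))
      = (∏ k : Fin (n + 1), ((b + 1) / 2 + (k.val : ℝ))⁻¹) *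
        ((∏ p ∈ Finset.Icc 1 (n + 1), (1 - μ p) ^ ((b + 1) / 2)) *
          ∏ p ∈ Finset.Icc 1 (n + 1), ∏ q ∈ Finset.Icc (p + 1) (n + 1), (μ p - μ q)) := by
    rw [hsetEq]
    rw [show (∫ l in Set.pi Set.univ fun j => Set.Ioo (esjA μ (n + 1) j) (esjB μ (n + 1) j),
        (∏ j : Fin (n + 1), (1 - l j) ^ ((b - 1) / 2)) *
          ∏ j : Fin (n + 1), ∏ k ∈ Finset.univ.filter (fun k => j < k), (l j - l k))
      = ∫ l, (esjSign (n + 1) *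
          Matrix.det (Matrix.of fun j k : Fin (n + 1) => esjF b k.val (l j)))
          ∂(Measure.pi fun j => volume.restrict (Set.Ioo (esjA μ (n + 1) j) (esjB μ (n + 1) j)))
      from by rw [← hres]; exact setIntegral_congr_fun (by
          exact (MeasurableSet.univ_pi fun j => measurableSet_Ioo)) (fun l _ => hint l)]
    rw [integral_const_mul,
      esj_andreief _ hfin (fun k => esjF b k.val) hFint, hval, hrow, hT, hvandA]
    calc esjSign (n + 1) *
          ((∏ j : Fin (n + 1), (1 - esjA μ (n + 1) j) ^ ((b + 1) / 2)) *
            ((∏ k : Fin (n + 1), ((b + 1) / 2 + (k.val : ℝ))⁻¹) *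
              (esjSign (n + 1) *
                ∏ p ∈ Finset.Icc 1 (n + 1), ∏ q ∈ Finset.Icc (p + 1) (n + 1), (μ p - μ q))))
        = (esjSign (n + 1) * esjSign (n + 1)) *
            ((∏ j : Fin (n + 1), (1 - esjA μ (n + 1) j) ^ ((b + 1) / 2)) *
            ((∏ k : Fin (n + 1), ((b + 1) / 2 + (k.val : ℝ))⁻¹) *
                ∏ p ∈ Finset.Icc 1 (n + 1), ∏ q ∈ Finset.Icc (p + 1) (n + 1), (μ p - μ q))) := by
          ring
      _ = _ := by rw [hε2, hAprod]; ring
  rw [hI]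
  have hpow : (∏ p ∈ Finset.Icc 1 (n + 1), (1 - μ p) ^ ((b + 1) / 2)) *
      (∏ p ∈ Finset.Icc 1 (n + 1), (1 - μ p) ^ ((b - 1) / 2))
      = ∏ p ∈ Finset.Icc 1 (n + 1), (1 - μ p) ^ b := by
    rw [← Finset.prod_mul_distrib]
    refine Finset.prod_congr rfl fun p hp => ?_
    rw [Finset.mem_Icc] at hp
    rw [← Real.rpow_add (show (0:ℝ) < 1 - μ p by have := hlt1 p hp.1 hp.2; linarith)]
    congr 1
    ring
  have hQ2 : (∏ p ∈ Finset.Icc 1 (n + 1), ∏ q ∈ Finset.Icc (p + 1) (n + 1), (μ p - μ q)) *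
      (∏ p ∈ Finset.Icc 1 (n + 1), ∏ q ∈ Finset.Icc (p + 1) (n + 1), (μ p - μ q))
      = ∏ p ∈ Finset.Icc 1 (n + 1), ∏ q ∈ Finset.Icc (p + 1) (n + 1), (μ p - μ q) ^ 2 := by
    rw [← Finset.prod_mul_distrib]
    refine Finset.prod_congr rfl fun p _ => ?_
    rw [← Finset.prod_mul_distrib]
    exact Finset.prod_congr rfl fun q _ => (sq (μ p - μ q)).symm
  rw [← hpow, ← hQ2]
  ring
end
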